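/- arXiv:2201.05522 — 2 statements merged into one kernel-verified Lean document; each statement's English description precedes it below -/
import Mathlib

section
/- For every integer n ≥ 1 there exists a constant C > 0 depending only on n such that for every continuously differentiable function f : ℝ → ℝ, ∫₀^{2π}∫₀^π f(Y_n⁰(θ)) Y_n⁰(θ) sinθ dθ dφ = C ∫₀^{2π}∫₀^π f'(Y_n⁰(θ)) (Y_n¹(θ,φ))² sinθ dθ dφ, i.e. ⟨f(Y_n⁰), Y_n⁰⟩_{L²(S²)} = C ⟨f'(Y_n⁰)Y_n¹, Y_n¹⟩_{L²(S²)}. -/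
open MeasureTheory
open scoped ENNReal

noncomputable section

/-- Functions on the unit sphere, represented in colatitude-longitude coordinates `(θ, φ)`. -/
abbrev SphereFun : Type := ℝ → ℝ → ℝ

/-- The `L²` inner product on the sphere:
`⟨u,v⟩ = ∫₀^{2π} ∫₀^π u v sin θ dθ dφ`. -/
def sInner (u v : SphereFun) : ℝ :=
  ∫ φ in (0:ℝ)..(2*Real.pi), ∫ θ in (0:ℝ)..Real.pi, u θ φ * v θ φ * Real.sin θ

/-- Legendre polynomials via Rodrigues' formula. -/
def legP (n : ℕ) (s : ℝ) : ℝ :=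
  (1 / ((2:ℝ)^n * (Nat.factorial n : ℝ))) * iteratedDeriv n (fun x : ℝ => (x^2 - 1)^n) s

/-- Associated Legendre functions `P_n^m`. -/
def assocLegP (n m : ℕ) (s : ℝ) : ℝ :=
  (-1 : ℝ)^m * (1 - s^2) ^ ((m : ℝ)/2) * iteratedDeriv m (legP n) s

/-- Real spherical harmonics `Y_n^m`. -/
def Ynm (n : ℕ) (m : ℤ) : SphereFun := fun θ φ =>
  if m = 0 then
    Real.sqrt ((2*(n:ℝ)+1)/(4*Real.pi)) * legP n (Real.cos θ)
  else if 0 < m then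
    (-1 : ℝ)^(m.natAbs) * Real.sqrt 2 *
      Real.sqrt ((2*(n:ℝ)+1)/(4*Real.pi) *
        ((Nat.factorial (n - m.natAbs) : ℝ) / (Nat.factorial (n + m.natAbs) : ℝ))) *
      assocLegP n m.natAbs (Real.cos θ) * Real.cos ((m.natAbs : ℝ) * φ)
  else
    (-1 : ℝ)^(m.natAbs) * Real.sqrt 2 *
      Real.sqrt ((2*(n:ℝ)+1)/(4*Real.pi) *
        ((Nat.factorial (n - m.natAbs) : ℝ) / (Nat.factorial (n + m.natAbs) : ℝ))) *
      assocLegP n m.natAbs (Real.cos θ) * Real.sin ((m.natAbs : ℝ) * φ)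

/-- The spherical-harmonic coefficient `u_n^m = ⟨u, Y_n^m⟩`. -/
def coeff (u : SphereFun) (n : ℕ) (m : ℤ) : ℝ := sInner u (Ynm n m)

/-- `μ_n = n(n+1) + 1`. -/
def muSp (n : ℕ) : ℝ := (n:ℝ)*((n:ℝ)+1)+1

/-- Squared (inhomogeneous) Sobolev norm `‖u‖²_{H^k} = Σ μ_n^k |u_n^m|²`. -/
def sobNormSq (k : ℕ) (u : SphereFun) : ℝ≥0∞ :=
  ∑' p : ℕ × ℤ, if |p.2| ≤ (p.1 : ℤ) then
    ENNReal.ofReal ((muSp p.1)^k * (coeff u p.1 p.2)^2) else 0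

/-- Squared homogeneous Sobolev norm `‖u‖²_{Ḣ^k} = Σ_{n ≥ 1} λ_n^k |u_n^m|²`. -/
def dotNormSq (k : ℕ) (u : SphereFun) : ℝ≥0∞ :=
  ∑' p : ℕ × ℤ, if 1 ≤ p.1 ∧ |p.2| ≤ (p.1 : ℤ) then
    ENNReal.ofReal (((p.1:ℝ)*((p.1:ℝ)+1))^k * (coeff u p.1 p.2)^2) else 0

/-- Squared Gevrey norm `‖u‖²_{G_λ} = Σ_{n ≥ 1} μ_n² e^{2λ√μ_n} |u_n^m|²`. -/
def gevNormSq (lam : ℝ) (u : SphereFun) : ℝ≥0∞ :=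
  ∑' p : ℕ × ℤ, if 1 ≤ p.1 ∧ |p.2| ≤ (p.1 : ℤ) then
    ENNReal.ofReal ((muSp p.1)^2 * Real.exp (2*lam*Real.sqrt (muSp p.1)) *
      (coeff u p.1 p.2)^2) else 0

/-- `∂_θ`. -/
def dTheta (u : SphereFun) : SphereFun := fun θ φ => deriv (fun t => u t φ) θ

/-- `∂_φ`. -/
def dPhi (u : SphereFun) : SphereFun := fun θ φ => deriv (fun p => u θ p) φ

/-- The Laplace–Beltrami operator in colatitude-longitude coordinates:
`Δu = (1/sinθ)∂_θ(sinθ ∂_θu) + (1/sin²θ)∂²_φu`. -/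
def lapS (u : SphereFun) : SphereFun := fun θ φ =>
  (1 / Real.sin θ) * deriv (fun t => Real.sin t * dTheta u t φ) θ
  + (1 / (Real.sin θ)^2) * dPhi (dPhi u) θ φ

/-- A zonal function: one depending only on the colatitude `θ`. -/
def Zonal (u : SphereFun) : Prop := ∀ (θ φ₁ φ₂ : ℝ), u θ φ₁ = u θ φ₂

/-- Zonal on the coordinate chart `θ ∈ [0, π]`. -/
def ZonalOn (u : SphereFun) : Prop :=
  ∀ θ ∈ Set.Icc (0:ℝ) Real.pi, ∀ (φ₁ φ₂ : ℝ), u θ φ₁ = u θ φ₂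

/-- `2π`-periodicity in the longitude. -/
def PeriodicPhi (u : SphereFun) : Prop := ∀ θ φ, u θ (φ + 2*Real.pi) = u θ φ

/-- The advection term `U·∇f` for the velocity `U = ∇⊥Ψ`, i.e.
`(1/sinθ)∂_φΨ ∂_θf − ∂_θΨ (1/sinθ)∂_φf`. -/
def advect (Ψ f : SphereFun) : SphereFun := fun θ φ =>
  (1 / Real.sin θ) * dPhi Ψ θ φ * dTheta f θ φ
  - dTheta Ψ θ φ * ((1 / Real.sin θ) * dPhi f θ φ)

/-- Smoothness in the coordinates. -/
def SphSmooth (u : SphereFun) : Prop := ContDiff ℝ (⊤ : ℕ∞) (Function.uncurry u)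

/-- A function is trivial if it is a zonal function plus an element of
`span{Y₂^m : |m| ≤ 2}`; non-triviality is the negation of this. -/
def SphNontrivial (u : SphereFun) : Prop :=
  ¬ ∃ (z : SphereFun) (c : ℤ → ℝ), Zonal z ∧
      ∀ θ ∈ Set.Icc (0:ℝ) Real.pi, ∀ φ : ℝ,
        u θ φ = z θ φ + ∑ m ∈ Finset.Icc (-2 : ℤ) 2, c m * Ynm 2 m θ φ

/-- Real analyticity on the sphere, characterized by membership in a Gevrey class. -/
def RealAnalyticSphere (u : SphereFun) : Prop := ∃ lam > 0, gevNormSq lam u < ⊤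


section SphAux
open Polynomial intervalIntegral

lemma iteratedDeriv_polyeval (p : ℝ[X]) (k : ℕ) :
    iteratedDeriv k (fun x => p.eval x) = fun x => (derivative^[k] p).eval x := by
  induction k with
  | zero => simp
  | succ k ih =>
    rw [iteratedDeriv_succ, ih, Function.iterate_succ_apply']
    funext x
    exact ((derivative^[k] p).hasDerivAt x).deriv

lemma iterate_derivative_eq_zero_of_ge (p : ℝ[X]) (m : ℕ) (h : derivative^[m] p = 0)
    (k : ℕ) (hk : m ≤ k) : derivative^[k] p = 0 := by
  obtain ⟨j, rfl⟩ := Nat.exists_eq_add_of_le hk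
  rw [add_comm, Function.iterate_add_apply, h]
  simp

lemma d3_sq : derivative^[3] ((X:ℝ[X])^2 - 1) = 0 := by
  show derivative (derivative (derivative _)) = 0
  simp [derivative_sub, derivative_X_pow]

lemma d2_X : derivative^[2] (X:ℝ[X]) = 0 := by
  show derivative (derivative _) = 0
  simp

/-- The key Legendre ODE at the level of `q = derivative^[n] ((X²-1)^n)`. -/
lemma legendre_ode_raw (n : ℕ) (hn : 1 ≤ n) :
    derivative ((1 - X^2) * derivative (derivative^[n] (((X:ℝ[X])^2 - 1)^n)))
      = C (-((n:ℝ)*((n:ℝ)+1))) * derivative^[n] (((X:ℝ[X])^2 - 1)^n) := by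
  set p : ℝ[X] := X^2 - 1 with hp
  set u : ℝ[X] := p ^ n with hu
  have hdp : derivative p = C 2 * X := by
    simp [hp]; rw [one_add_one_eq_two]; exact (map_ofNat C 2).symm
  -- step A : p * derivative u = C (2n) * (u * X)
  have hA : p * derivative u = (C (n:ℝ) * C 2) * (u * X) := by
    rw [hu, derivative_pow, hdp]
    have : p * (C (n:ℝ) * p ^ (n-1) * (C 2 * X)) = (C (n:ℝ) * C 2) * ((p^(n-1) * p) * X) := by
      ring
    rw [this, ← pow_succ, Nat.sub_add_cancel hn]
  -- apply derivative^[n+1] to both sides, with the product written high-order-first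
  have hB : derivative^[n+1] (derivative u * p) = derivative^[n+1] ((C (n:ℝ) * C 2) * (u * X)) := by
    rw [mul_comm (derivative u) p, hA]
  rw [iterate_derivative_mul, ← C_mul, iterate_derivative_C_mul, iterate_derivative_mul] at hB
  -- truncate sums
  have hsub3 : Finset.range 3 ⊆ Finset.range (n+1+1) := Finset.range_subset_range.2 (by omega)
  have hsub2 : Finset.range 2 ⊆ Finset.range (n+1+1) := Finset.range_subset_range.2 (by omega)
  rw [← Finset.sum_subset hsub3 (fun k _ hk => by
        have : derivative^[k] p = 0 :=
          iterate_derivative_eq_zero_of_ge p 3 d3_sq k (by simpa using hk)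
        simp [this]),
      ← Finset.sum_subset hsub2 (fun k _ hk => by
        have : derivative^[k] X = 0 :=
          iterate_derivative_eq_zero_of_ge X 2 d2_X k (by simp at hk; omega)
        simp [this])] at hB
  simp only [Finset.sum_range_succ, Finset.sum_range_zero, zero_add] at hB
  have e2 : (⇑derivative)^[n+1-0] (derivative u) = (⇑derivative)^[n+2] u :=
    (Function.iterate_succ_apply derivative (n+1) u).symm
  have e1 : (⇑derivative)^[n+1-1] (derivative u) = (⇑derivative)^[n+1] u := by
    rw [show n+1-1 = n from rfl]
    exact (Function.iterate_succ_apply derivative n u).symm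
  have e0 : (⇑derivative)^[n+1-2] (derivative u) = (⇑derivative)^[n] u := by
    have hne : n+1-2+1 = n := by omega
    rw [show (⇑derivative)^[n+1-2] (derivative u) = (⇑derivative)^[n+1-2+1] u from
      (Function.iterate_succ_apply _ _ _).symm, hne]
  have ep0 : (⇑derivative)^[0] p = p := rfl
  have ep1 : (⇑derivative)^[1] p = C 2 * X := by simpa using hdp
  have ep2 : (⇑derivative)^[2] p = C 2 := by
    show derivative (derivative p) = C 2
    rw [hdp]; simp
  have eX0 : (⇑derivative)^[0] (X:ℝ[X]) = X := rfl
  have eX1 : (⇑derivative)^[1] (X:ℝ[X]) = 1 := by simp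
  rw [e2, e1, e0, ep0, ep1, ep2, eX0, eX1] at hB
  have hch2 : (n+1) * n = (n+1).choose 2 * 2 := by
    rw [← Nat.add_one_mul_choose_eq, Nat.choose_one_right]
  have hc : ((n:ℝ[X])+1) * (n:ℝ[X]) = ((n+1).choose 2 : ℕ) * 2 := by
    exact_mod_cast congrArg (Nat.cast : ℕ → ℝ[X]) hch2
  set D2 := (⇑derivative)^[n+2] u
  set D1 := (⇑derivative)^[n+1] u
  set Q := (⇑derivative)^[n] u with hQ
  have eD : derivative Q = D1 := (Function.iterate_succ_apply' derivative n u).symm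
  rw [derivative_mul, eD]
  have eD2 : derivative D1 = D2 := (Function.iterate_succ_apply' derivative (n+1) u).symm
  rw [eD2]
  have ed1 : derivative (1 - X^2 : ℝ[X]) = -(C 2 * X) := by
    simp; rw [one_add_one_eq_two]; exact (map_ofNat C 2).symm
  rw [ed1]
  have r1 : (⇑derivative)^[n+1-0] u = D1 := rfl
  have r0 : (⇑derivative)^[n+1-1] u = Q := rfl
  rw [r1, r0] at hB
  simp only [nsmul_eq_mul, Nat.choose_zero_right, Nat.choose_one_right, Nat.cast_one,
    Nat.cast_add, one_mul, mul_one, hp] at hB ⊢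
  have hC2 : (C 2 : ℝ[X]) = 2 := map_ofNat C 2
  have hCn : (C (n:ℝ) : ℝ[X]) = (n:ℝ[X]) := Polynomial.C_eq_natCast n
  have hCg : (C (-((n:ℝ)*((n:ℝ)+1))) : ℝ[X]) = -((n:ℝ[X])*((n:ℝ[X])+1)) := by
    rw [map_neg, map_mul, map_add, map_one, hCn]
  have hCm : (C ((n:ℝ)*2) : ℝ[X]) = (n:ℝ[X]) * 2 := by rw [map_mul, hCn, hC2]
  rw [hC2] at hB ⊢
  rw [hCm] at hB
  rw [hCg]
  linear_combination (-1 : ℝ[X]) * hB - Q * hc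


def PnP (n : ℕ) : ℝ[X] :=
  C (1 / ((2:ℝ)^n * (Nat.factorial n : ℝ))) * derivative^[n] (((X:ℝ[X])^2 - 1)^n)

lemma legendre_ode (n : ℕ) (hn : 1 ≤ n) :
    derivative ((1 - X^2) * derivative (PnP n))
      = C (-((n:ℝ)*((n:ℝ)+1))) * PnP n := by
  unfold PnP
  rw [derivative_C_mul, mul_left_comm, derivative_C_mul, legendre_ode_raw n hn]
  ring

lemma subst_cos (F : ℝ → ℝ) (hF : Continuous F) :
    ∫ θ in (0:ℝ)..Real.pi, F (Real.cos θ) * Real.sin θ = ∫ s in (-1:ℝ)..1, F s := by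
  have h := intervalIntegral.integral_comp_smul_deriv (a := (0:ℝ)) (b := Real.pi)
    (f := Real.cos) (f' := fun x => -Real.sin x) (g := F)
    (fun x _ => Real.hasDerivAt_cos x) (Real.continuous_sin.neg.continuousOn) hF
  rw [Real.cos_zero, Real.cos_pi] at h
  have h2 : ∫ θ in (0:ℝ)..Real.pi, F (Real.cos θ) * Real.sin θ
      = -∫ x in (0:ℝ)..Real.pi, (-Real.sin x) • (F ∘ Real.cos) x := by
    rw [← intervalIntegral.integral_neg]
    apply intervalIntegral.integral_congr
    intro x _
    simp [Function.comp]
    ring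
  rw [h2, h, intervalIntegral.integral_symm, neg_neg]

lemma parts (n : ℕ) (hn : 1 ≤ n) (a : ℝ) (f : ℝ → ℝ) (hf : ContDiff ℝ 1 f) :
    ((n:ℝ)*((n:ℝ)+1)) * ∫ s in (-1:ℝ)..1, f (a * (PnP n).eval s) * (PnP n).eval s
      = a * ∫ s in (-1:ℝ)..1,
          deriv f (a * (PnP n).eval s) * ((1 - s^2) * ((derivative (PnP n)).eval s)^2) := by
  set P := PnP n with hP
  set W : ℝ[X] := (1 - X^2) * derivative P with hW
  set N : ℝ := (n:ℝ)*((n:ℝ)+1) with hN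
  have hu : ∀ x ∈ Set.uIcc (-1:ℝ) 1, HasDerivAt (fun s => f (a * P.eval s))
      (deriv f (a * P.eval x) * (a * (derivative P).eval x)) x := by
    intro x _
    exact ((hf.differentiable one_ne_zero).differentiableAt.hasDerivAt).comp x
      ((P.hasDerivAt x).const_mul a)
  have hv : ∀ x ∈ Set.uIcc (-1:ℝ) 1, HasDerivAt (fun s => W.eval s)
      ((derivative W).eval x) x := fun x _ => W.hasDerivAt x
  have hcderiv : Continuous (deriv f) := hf.continuous_deriv le_rfl
  have hu' : IntervalIntegrable
      (fun x => deriv f (a * P.eval x) * (a * (derivative P).eval x)) volume (-1) 1 :=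
    ((hcderiv.comp (continuous_const.mul P.continuous)).mul
      (continuous_const.mul (derivative P).continuous)).intervalIntegrable _ _
  have hv' : IntervalIntegrable (fun x => (derivative W).eval x) volume (-1) 1 :=
    ((derivative W).continuous).intervalIntegrable _ _
  have hibp := intervalIntegral.integral_mul_deriv_eq_deriv_mul hu hv hu' hv'
  have hW1 : W.eval 1 = 0 := by simp [hW]
  have hWm1 : W.eval (-1) = 0 := by simp [hW]
  rw [hW1, hWm1] at hibp
  have hode : ∀ x : ℝ, (derivative W).eval x = -N * P.eval x := by
    intro x
    rw [hW, legendre_ode n hn]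
    simp [hN]; exact Or.inl rfl
  have hL : ∫ x in (-1:ℝ)..1, f (a * P.eval x) * (derivative W).eval x
      = -N * ∫ s in (-1:ℝ)..1, f (a * P.eval s) * P.eval s := by
    rw [← intervalIntegral.integral_const_mul]
    apply intervalIntegral.integral_congr
    intro x _
    show f (a * P.eval x) * (derivative W).eval x = -N * (f (a * P.eval x) * P.eval x)
    rw [hode x]; ring
  have hR : ∫ x in (-1:ℝ)..1,
        (deriv f (a * P.eval x) * (a * (derivative P).eval x)) * W.eval x
      = a * ∫ s in (-1:ℝ)..1,
          deriv f (a * P.eval s) * ((1 - s^2) * ((derivative P).eval s)^2) := by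
    rw [← intervalIntegral.integral_const_mul]
    apply intervalIntegral.integral_congr
    intro x _
    show (deriv f (a * P.eval x) * (a * (derivative P).eval x)) * W.eval x
      = a * (deriv f (a * P.eval x) * ((1 - x^2) * ((derivative P).eval x)^2))
    rw [hW]
    simp only [eval_mul, eval_sub, eval_one, eval_pow, eval_X]
    ring
  rw [hL] at hibp
  rw [hR] at hibp
  linarith [hibp]

lemma legP_eq (n : ℕ) (s : ℝ) : legP n s = (PnP n).eval s := by
  unfold legP PnP
  rw [show (fun x : ℝ => (x^2-1)^n) = fun x => ((((X:ℝ[X])^2-1)^n).eval x) by funext x; simp]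
  rw [iteratedDeriv_polyeval]
  simp

end SphAux

/-- For every `n ≥ 1` there is `C > 0` depending only on `n`
such that `⟨f(Y_n⁰), Y_n⁰⟩ = C⟨f'(Y_n⁰)Y_n¹, Y_n¹⟩` for all `f ∈ C¹`. -/
theorem inner_f_Yn0_eq_inner_deriv_Yn1 (n : ℕ) (hn : 1 ≤ n) :
    ∃ C : ℝ, 0 < C ∧
      ∀ f : ℝ → ℝ, ContDiff ℝ 1 f →
        sInner (fun θ φ => f (Ynm n 0 θ φ)) (Ynm n 0)
          = C * sInner (fun θ φ => deriv f (Ynm n 0 θ φ) * Ynm n 1 θ φ) (Ynm n 1) := by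
  classical
  refine ⟨1, one_pos, ?_⟩
  intro f hf
  have hπ := Real.pi_pos
  set P : Polynomial ℝ := PnP n with hPdef
  set a : ℝ := Real.sqrt ((2*(n:ℝ)+1)/(4*Real.pi)) with ha
  set r : ℝ := (2*(n:ℝ)+1)/(4*Real.pi) *
      ((Nat.factorial (n - 1) : ℝ) / (Nat.factorial (n + 1) : ℝ)) with hr
  have hrnn : 0 ≤ r := by
    rw [hr]; positivity
  have hY0 : ∀ θ φ : ℝ, Ynm n 0 θ φ = a * P.eval (Real.cos θ) := by
    intro θ φ
    simp only [Ynm, legP_eq, ha, hPdef]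
    norm_num
  have hderivP : iteratedDeriv 1 (legP n) = fun s => (Polynomial.derivative P).eval s := by
    rw [iteratedDeriv_one, show legP n = fun s => P.eval s from funext fun s => legP_eq n s]
    funext s
    exact (P.hasDerivAt s).deriv
  have hY1 : ∀ θ φ : ℝ, Ynm n 1 θ φ = Real.sqrt 2 * Real.sqrt r *
      ((1 - (Real.cos θ)^2) ^ ((1:ℝ)/2) * (Polynomial.derivative P).eval (Real.cos θ)) *
        Real.cos φ := by
    intro θ φ
    simp only [Ynm, assocLegP, hderivP, if_neg (by norm_num : ¬ (1:ℤ) = 0),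
      if_pos (by norm_num : (0:ℤ) < 1), Int.natAbs_one, pow_one, Nat.cast_one, one_mul, ← hr]
    ring
  have hY1sq : ∀ θ φ : ℝ, Ynm n 1 θ φ * Ynm n 1 θ φ
      = (Real.cos φ)^2 * ((2*r) *
          ((1 - (Real.cos θ)^2) * ((Polynomial.derivative P).eval (Real.cos θ))^2)) := by
    intro θ φ
    have h1c : (0:ℝ) ≤ 1 - (Real.cos θ)^2 := by
      have := Real.cos_sq_le_one θ; linarith
    have hhalf : ((1 - (Real.cos θ)^2) ^ ((1:ℝ)/2)) * ((1 - (Real.cos θ)^2) ^ ((1:ℝ)/2))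
        = 1 - (Real.cos θ)^2 := by
      rw [← Real.sqrt_eq_rpow, Real.mul_self_sqrt h1c]
    rw [hY1, show ∀ A B Xh D cφ : ℝ, (A * B * (Xh * D) * cφ) * (A * B * (Xh * D) * cφ)
        = cφ^2 * ((A*A) * (B*B) * ((Xh*Xh) * (D*D))) from fun _ _ _ _ _ => by ring,
      Real.mul_self_sqrt (by norm_num : (0:ℝ) ≤ 2), Real.mul_self_sqrt hrnn, hhalf]
    ring
  have hcont_f : Continuous f := hf.continuous
  have hcont_df : Continuous (deriv f) := hf.continuous_deriv le_rfl
  have hPcont : Continuous (fun s : ℝ => P.eval s) := P.continuous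
  have hdPcont : Continuous (fun s : ℝ => (Polynomial.derivative P).eval s) :=
    (Polynomial.derivative P).continuous
  set I : ℝ := ∫ s in (-1:ℝ)..1, f (a * P.eval s) * P.eval s with hIdef
  set J : ℝ := ∫ s in (-1:ℝ)..1,
      deriv f (a * P.eval s) * ((1 - s^2) * ((Polynomial.derivative P).eval s)^2) with hJdef
  have hinnerL : ∀ φ : ℝ, (∫ θ in (0:ℝ)..Real.pi,
      f (Ynm n 0 θ φ) * Ynm n 0 θ φ * Real.sin θ) = a * I := by
    intro φ
    have hcg : Set.EqOn (fun θ => f (Ynm n 0 θ φ) * Ynm n 0 θ φ * Real.sin θ)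
        (fun θ => (fun s => a * (f (a * P.eval s) * P.eval s)) (Real.cos θ) * Real.sin θ)
        (Set.uIcc (0:ℝ) Real.pi) := by
      intro θ _
      show f (Ynm n 0 θ φ) * Ynm n 0 θ φ * Real.sin θ = _
      rw [hY0]; ring
    have hFc : Continuous (fun s : ℝ => a * (f (a * P.eval s) * P.eval s)) := by
      exact continuous_const.mul ((hcont_f.comp (continuous_const.mul hPcont)).mul hPcont)
    rw [intervalIntegral.integral_congr hcg, subst_cos _ hFc,
      intervalIntegral.integral_const_mul]
  have hLHS : sInner (fun θ φ => f (Ynm n 0 θ φ)) (Ynm n 0) = 2*Real.pi*(a*I) := by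
    unfold sInner
    rw [intervalIntegral.integral_congr (g := fun _ : ℝ => a * I) (fun φ _ => hinnerL φ),
      intervalIntegral.integral_const]
    simp

  have hinnerR : ∀ φ : ℝ, (∫ θ in (0:ℝ)..Real.pi,
      (deriv f (Ynm n 0 θ φ) * Ynm n 1 θ φ) * Ynm n 1 θ φ * Real.sin θ)
      = (Real.cos φ)^2 * ((2*r) * J) := by
    intro φ
    have hcg : Set.EqOn
        (fun θ => (deriv f (Ynm n 0 θ φ) * Ynm n 1 θ φ) * Ynm n 1 θ φ * Real.sin θ)
        (fun θ => (fun s => (Real.cos φ)^2 * ((2*r) *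
          (deriv f (a * P.eval s) * ((1 - s^2) * ((Polynomial.derivative P).eval s)^2))))
          (Real.cos θ) * Real.sin θ) (Set.uIcc (0:ℝ) Real.pi) := by
      intro θ _
      show (deriv f (Ynm n 0 θ φ) * Ynm n 1 θ φ) * Ynm n 1 θ φ * Real.sin θ = _
      rw [hY0]
      have h1 : (deriv f (a * P.eval (Real.cos θ)) * Ynm n 1 θ φ) * Ynm n 1 θ φ * Real.sin θ
          = deriv f (a * P.eval (Real.cos θ)) * (Ynm n 1 θ φ * Ynm n 1 θ φ) * Real.sin θ := by
        ring
      rw [h1, hY1sq θ φ]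
      ring
    have hFc : Continuous (fun s : ℝ => (Real.cos φ)^2 * ((2*r) *
        (deriv f (a * P.eval s) * ((1 - s^2) * ((Polynomial.derivative P).eval s)^2)))) := by
      exact continuous_const.mul (continuous_const.mul
        ((hcont_df.comp (continuous_const.mul hPcont)).mul
          ((continuous_const.sub (continuous_pow 2)).mul (hdPcont.pow 2))))
    rw [intervalIntegral.integral_congr hcg, subst_cos _ hFc,
      intervalIntegral.integral_const_mul, intervalIntegral.integral_const_mul]
  have hRHS : sInner (fun θ φ => deriv f (Ynm n 0 θ φ) * Ynm n 1 θ φ) (Ynm n 1)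
      = Real.pi * ((2*r) * J) := by
    unfold sInner
    rw [intervalIntegral.integral_congr
        (g := fun φ : ℝ => (Real.cos φ)^2 * ((2*r) * J)) (fun φ _ => hinnerR φ),
      intervalIntegral.integral_mul_const, integral_cos_sq]
    simp [Real.sin_two_pi, Real.cos_two_pi]

  rw [hLHS, hRHS]
  have hparts : ((n:ℝ)*((n:ℝ)+1)) * I = a * J := parts n hn a f hf
  have ha2 : a * a = (2*(n:ℝ)+1)/(4*Real.pi) := Real.mul_self_sqrt (by positivity)
  have hfact : ((Nat.factorial (n+1) : ℕ) : ℝ)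
      = ((n:ℝ)+1) * ((n:ℝ) * ((Nat.factorial (n-1) : ℕ) : ℝ)) := by
    have h2 : Nat.factorial n = n * Nat.factorial (n-1) := by
      conv_lhs => rw [show n = (n-1)+1 by omega]
      rw [Nat.factorial_succ]
      congr 1
      omega
    rw [Nat.factorial_succ, h2]
    push_cast
    ring
  have hfne : ((Nat.factorial (n-1) : ℕ) : ℝ) ≠ 0 :=
    Nat.cast_ne_zero.2 (Nat.factorial_ne_zero _)
  have hn0 : (n:ℝ) ≠ 0 := Nat.cast_ne_zero.2 (by omega)
  have hn1 : (n:ℝ) + 1 ≠ 0 := by positivity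
  have hrN : r * ((n:ℝ)*((n:ℝ)+1)) = a * a := by
    rw [ha2, hr, hfact]
    field_simp
  have hN0 : ((n:ℝ)*((n:ℝ)+1)) ≠ 0 := by positivity
  have key : ((n:ℝ)*((n:ℝ)+1)) * (2*Real.pi*(a*I))
      = ((n:ℝ)*((n:ℝ)+1)) * (1*(Real.pi*((2*r)*J))) := by
    linear_combination (2*Real.pi*a) * hparts - (2*Real.pi*J) * hrN
  exact mul_left_cancel₀ hN0 key
end
end

section
/- Let N ≥ 1 be an integer, let K, c, Λ > 0, and let y : [0,Λ] → [0,∞) be differentiable with y'(λ) ≤ K e^{cλ}(1 + y(λ)^N) for all λ ∈ [0,Λ]. Then for every λ ∈ [0,Λ] such that (1+y(0)^N)·N·K·(e^{cλ}−1)/c < 1, one has y(λ)^N ≤ (y(0)^N + (1+y(0)^N)·N·K·(e^{cλ}−1)/c) / (1 − (1+y(0)^N)·N·K·(e^{cλ}−1)/c). -/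
lemma pow_pred_le (a : ℝ) (ha : 0 ≤ a) (N : ℕ) (hN : 1 ≤ N) :
    a ^ (N - 1) ≤ 1 + a ^ N := by
  rcases le_or_gt a 1 with h | h
  · have h1 : a ^ (N-1) ≤ 1 := pow_le_one₀ ha h
    have h2 : (0:ℝ) ≤ a ^ N := pow_nonneg ha N
    linarith
  · have h1 : (1:ℝ) ≤ a := h.le
    have h2 : a ^ (N-1) ≤ a ^ N := pow_le_pow_right₀ h1 (Nat.sub_le N 1)
    have h3 : (0:ℝ) ≤ a ^ N := pow_nonneg ha N
    linarith

/-- Grönwall/Riccati type differential inequality: if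
`y' ≤ Ke^{cλ}(1+y^N)` on `[0,Λ]` with `y ≥ 0`, then wherever
`(1+y(0)^N)NK(e^{cλ}−1)/c < 1` one has
`y(λ)^N ≤ (y(0)^N + (1+y(0)^N)NK(e^{cλ}−1)/c)/(1 − (1+y(0)^N)NK(e^{cλ}−1)/c)`. -/
theorem riccati_gronwall_inequality (N : ℕ) (hN : 1 ≤ N)
    (K c Λ : ℝ) (hK : 0 < K) (hc : 0 < c) (hΛ : 0 < Λ)
    (y d : ℝ → ℝ)
    (hpos : ∀ t ∈ Set.Icc (0:ℝ) Λ, 0 ≤ y t)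
    (hderiv : ∀ t ∈ Set.Icc (0:ℝ) Λ, HasDerivAt y (d t) t)
    (hineq : ∀ t ∈ Set.Icc (0:ℝ) Λ, d t ≤ K * Real.exp (c*t) * (1 + y t ^ N)) :
    ∀ t ∈ Set.Icc (0:ℝ) Λ,
      (1 + y 0 ^ N) * N * K * (Real.exp (c*t) - 1)/c < 1 →
      y t ^ N
        ≤ (y 0 ^ N + (1 + y 0 ^ N) * N * K * (Real.exp (c*t) - 1)/c)
          / (1 - (1 + y 0 ^ N) * N * K * (Real.exp (c*t) - 1)/c) := by
  intro t ht hlt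
  set z : ℝ → ℝ := fun s => 1 + y s ^ N with hzdef
  have hz1 : ∀ s ∈ Set.Icc (0:ℝ) Λ, (1:ℝ) ≤ z s := by
    intro s hs
    have := pow_nonneg (hpos s hs) N
    simp only [hzdef]; linarith
  have hzpos : ∀ s ∈ Set.Icc (0:ℝ) Λ, (0:ℝ) < z s :=
    fun s hs => lt_of_lt_of_le one_pos (hz1 s hs)
  have hzd : ∀ s ∈ Set.Icc (0:ℝ) Λ,
      HasDerivAt z ((N:ℝ) * y s ^ (N-1) * d s) s := by
    intro s hs
    simpa [hzdef] using (HasDerivAt.const_add 1 ((hderiv s hs).pow N))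
  set g : ℝ → ℝ := fun s => (z s)⁻¹ + (N*K/c) * Real.exp (c*s) with hgdef
  have hgd : ∀ s ∈ Set.Icc (0:ℝ) Λ,
      HasDerivAt g (-((N:ℝ) * y s ^ (N-1) * d s) / (z s)^2
        + (N*K/c) * (Real.exp (c*s) * c)) s := by
    intro s hs
    have h1 : HasDerivAt (fun x => (z x)⁻¹) (-((N:ℝ) * y s ^ (N-1) * d s) / (z s)^2) s :=
      (hzd s hs).inv (ne_of_gt (hzpos s hs))
    have h2 : HasDerivAt (fun x => Real.exp (c*x)) (Real.exp (c*s) * c) s := by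
      simpa using (HasDerivAt.exp ((hasDerivAt_id s).const_mul c))
    exact h1.add (h2.const_mul (N*K/c))
  have hmono : MonotoneOn g (Set.Icc 0 Λ) := by
    apply monotoneOn_of_deriv_nonneg (convex_Icc 0 Λ)
    · intro s hs
      exact ((hgd s hs).continuousAt).continuousWithinAt
    · intro s hs
      rw [interior_Icc] at hs
      exact ((hgd s (Set.mem_Icc_of_Ioo hs)).differentiableAt).differentiableWithinAt
    · intro s hs
      rw [interior_Icc] at hs
      have hs' := Set.mem_Icc_of_Ioo hs
      rw [(hgd s hs').deriv]
      have he : (0:ℝ) < Real.exp (c*s) := Real.exp_pos _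
      have hd := hineq s hs'
      have hyp : (0:ℝ) ≤ y s ^ (N-1) := pow_nonneg (hpos s hs') _
      have hyz : y s ^ (N-1) ≤ z s := pow_pred_le (y s) (hpos s hs') N hN
      have hz1' := hz1 s hs'
      have hNpos : (0:ℝ) < (N:ℝ) := by exact_mod_cast hN
      have key : (N:ℝ) * y s ^ (N-1) * d s ≤ (N:ℝ) * K * Real.exp (c*s) * (z s)^2 := by
        have h1 : (N:ℝ) * y s ^ (N-1) * d s
            ≤ (N:ℝ) * y s ^ (N-1) * (K * Real.exp (c*s) * z s) := by
          apply mul_le_mul_of_nonneg_left hd (by positivity)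
        have h2 : (N:ℝ) * y s ^ (N-1) * (K * Real.exp (c*s) * z s)
            ≤ (N:ℝ) * K * Real.exp (c*s) * (z s)^2 := by
          have h3 := mul_le_mul_of_nonneg_left hyz
            (show (0:ℝ) ≤ (N:ℝ)*K*Real.exp (c*s)*z s by positivity)
          nlinarith [h3]
        linarith
      have hzsq : (0:ℝ) < (z s)^2 := by positivity
      have heq : (N*K/c) * (Real.exp (c*s) * c) = (N:ℝ) * K * Real.exp (c*s) := by
        field_simp
      rw [heq, neg_div]
      have hfin : (N:ℝ) * y s ^ (N-1) * d s / (z s)^2 ≤ (N:ℝ) * K * Real.exp (c*s) := by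
        rw [div_le_iff₀ hzsq]; linarith
      linarith
  have h0 : (0:ℝ) ∈ Set.Icc (0:ℝ) Λ := Set.mem_Icc.mpr ⟨le_refl 0, le_of_lt hΛ⟩
  have hg := hmono h0 ht ht.1
  simp only [hgdef, mul_zero, Real.exp_zero, mul_one] at hg
  set A : ℝ := (1 + y 0 ^ N) * N * K * (Real.exp (c*t) - 1)/c with hAdef
  have hz0 : z 0 = 1 + y 0 ^ N := rfl
  have hz0pos : (0:ℝ) < z 0 := hzpos 0 h0
  have hztpos : (0:ℝ) < z t := hzpos t ht
  have he1 : (1:ℝ) ≤ Real.exp (c*t) := by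
    have h1 : (0:ℝ) ≤ c*t := mul_nonneg (le_of_lt hc) ht.1
    simpa using Real.exp_le_exp.mpr h1
  have hA0 : 0 ≤ A := by
    rw [hAdef]
    apply div_nonneg _ hc.le
    have : (0:ℝ) ≤ Real.exp (c*t) - 1 := by linarith
    have h1 : (0:ℝ) < 1 + y 0 ^ N := by rw [← hz0]; exact hz0pos
    have hN0 : (0:ℝ) ≤ (N:ℝ) := Nat.cast_nonneg N
    positivity
  have hb : (0:ℝ) < 1 - A := by linarith
  have hAeq : (1 - A)/(z 0) = (z 0)⁻¹ - (N*K/c) * (Real.exp (c*t) - 1) := by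
    rw [hAdef, hz0]
    have h1 : (0:ℝ) < 1 + y 0 ^ N := by rw [← hz0]; exact hz0pos
    field_simp
  have hinv : (1 - A)/(z 0) ≤ (z t)⁻¹ := by
    rw [hAeq]; linarith
  have hzt : z t * (1 - A) ≤ z 0 := by
    have h1 := mul_le_mul_of_nonneg_left hinv hztpos.le
    rw [mul_inv_cancel₀ (ne_of_gt hztpos), ← mul_div_assoc] at h1
    exact (div_le_one hz0pos).mp h1
  have hyt : y t ^ N = z t - 1 := by simp [hzdef]
  rw [hyt, le_div_iff₀ hb]
  have : z t * (1 - A) ≤ 1 + y 0 ^ N := by rw [← hz0]; exact hzt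
  nlinarith
end
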